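/- arXiv:1802.06293 — 9 statements merged into one kernel-verified Lean document; each statement's English description precedes it below -/
import Mathlib

section
/- For all real x with -1 < x ≤ 2, it holds that ln(1+x) ≤ x - ((2 - ln 3)/4)·x². -/
lemma log3_lb : (1.0952 : ℝ) ≤ Real.log 3 := by
  have h98 : (1/9 : ℝ) ≤ Real.log (9/8 : ℝ) := by
    have h := Real.log_le_sub_one_of_pos (show (0:ℝ) < 8/9 by norm_num)
    have h2 : Real.log (8/9 : ℝ) = - Real.log (9/8 : ℝ) := by
      rw [show (8/9 : ℝ) = (9/8 : ℝ)⁻¹ by norm_num, Real.log_inv]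
    rw [h2] at h; linarith
  have h9 : Real.log (9 : ℝ) = 2 * Real.log 3 := by
    rw [show (9:ℝ) = 3^2 by norm_num, Real.log_pow]; push_cast; ring
  have h9' : Real.log (9 : ℝ) = 3 * Real.log 2 + Real.log (9/8 : ℝ) := by
    rw [show (9:ℝ) = 2^3 * (9/8) by norm_num, Real.log_mul (by norm_num) (by norm_num),
      Real.log_pow]; push_cast; ring
  have := Real.log_two_gt_d9
  linarith

lemma log3_ub : Real.log 3 ≤ (1.10223 : ℝ) := by
  have h98 : Real.log (9/8 : ℝ) ≤ 1/8 := by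
    have h := Real.log_le_sub_one_of_pos (show (0:ℝ) < 9/8 by norm_num)
    linarith
  have h9 : Real.log (9 : ℝ) = 2 * Real.log 3 := by
    rw [show (9:ℝ) = 3^2 by norm_num, Real.log_pow]; push_cast; ring
  have h9' : Real.log (9 : ℝ) = 3 * Real.log 2 + Real.log (9/8 : ℝ) := by
    rw [show (9:ℝ) = 2^3 * (9/8) by norm_num, Real.log_mul (by norm_num) (by norm_num),
      Real.log_pow]; push_cast; ring
  have := Real.log_two_lt_d9
  linarith

theorem log_upper_bound (x : ℝ) (h1 : -1 < x) (h2 : x ≤ 2) :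
    Real.log (1 + x) ≤ x - ((2 - Real.log 3) / 4) * x ^ 2 := by
  have hL1 := log3_lb
  have hL2 := log3_ub
  have hx0 : (0:ℝ) < 1 + x := by linarith
  rcases le_or_gt x 1 with hx1 | hx1
  · -- x ≤ 1 : use fourth root
    set u := Real.sqrt (Real.sqrt (1+x)) with hu
    have hu0 : 0 < u := Real.sqrt_pos.2 (Real.sqrt_pos.2 hx0)
    have hu2 : u^2 = Real.sqrt (1+x) := Real.sq_sqrt (Real.sqrt_nonneg _)
    have hu4 : u^4 = 1 + x := by
      rw [show u^4 = (u^2)^2 by ring, hu2]; exact Real.sq_sqrt hx0.le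
    have hlog : Real.log (1+x) = 4 * Real.log u := by
      rw [← hu4, Real.log_pow]; push_cast; ring
    have hloga : Real.log u ≤ u - 1 := Real.log_le_sub_one_of_pos hu0
    have hub : u^4 ≤ 2 := by rw [hu4]; linarith
    have hu119 : u ≤ 1.19 := by
      by_contra h; push_neg at h
      have h2 : (1.19:ℝ)^4 ≤ u^4 := by
        apply pow_le_pow_left₀ (by norm_num : (0:ℝ) ≤ 1.19) h.le
      norm_num at h2; linarith
    have hA : (0:ℝ) ≤ 1.19 - u := by linarith
    have hB : (0:ℝ) ≤ u := hu0.le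
    have hQ : (0:ℝ) ≤ (Real.log 3 - 1.0952) * ((u+1)^2*(u^2+1)^2) :=
      mul_nonneg (by linarith) (by positivity)
    have key : (2 - Real.log 3)/4 * ((u+1)^2*(u^2+1)^2) ≤ u^2+2*u+3 := by
      nlinarith [hQ,
        pow_nonneg hA 6,
        mul_nonneg (pow_nonneg hA 5) hB,
        mul_nonneg (pow_nonneg hA 4) (pow_nonneg hB 2),
        mul_nonneg (pow_nonneg hA 3) (pow_nonneg hB 3),
        mul_nonneg (pow_nonneg hA 2) (pow_nonneg hB 4),
        mul_nonneg hA (pow_nonneg hB 5),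
        pow_nonneg hB 6]
    have hxeq : x = u^4 - 1 := by linarith
    have expand : x - (2 - Real.log 3)/4 * x^2 - 4*(u-1)
        = (u-1)^2 * ((u^2+2*u+3) - (2 - Real.log 3)/4 * ((u+1)^2*(u^2+1)^2)) := by
      rw [hxeq]; ring
    have h := mul_nonneg (sq_nonneg (u-1)) (sub_nonneg.2 key)
    rw [hlog]
    linarith [expand, h, hloga]
  · -- 1 < x : expand around 3
    set s := Real.sqrt ((1+x)/3) with hs
    have hs0 : 0 < s := Real.sqrt_pos.2 (by linarith)
    have hs2 : s^2 = (1+x)/3 := Real.sq_sqrt (by linarith)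
    have hslow : (2:ℝ)/3 ≤ s^2 := by rw [hs2]; linarith
    have hsup : s^2 ≤ 1 := by rw [hs2]; linarith
    have hs1 : s ≤ 1 := by nlinarith [hs0.le]
    have hsl : (0.81 : ℝ) ≤ s := by nlinarith [hs0.le]
    have hlog : Real.log (1+x) = Real.log 3 + 2 * Real.log s := by
      rw [show (1+x : ℝ) = 3 * s^2 by rw [hs2]; ring,
        Real.log_mul (by norm_num) (by positivity), Real.log_pow]
      push_cast; ring
    have hloga : Real.log s ≤ s - 1 := Real.log_le_sub_one_of_pos hs0
    have hC : (0:ℝ) ≤ 1 - s := by linarith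
    have hD : (0:ℝ) ≤ s - 0.81 := by linarith
    have key : 0 ≤ 3*((2 - Real.log 3)/4)*(1+s)*(1+3*s^2) - (3*s+1) := by
      nlinarith [mul_nonneg hC hD, mul_nonneg hC hC, mul_nonneg hD hD,
        mul_nonneg (mul_nonneg hC hD) hD, mul_nonneg (mul_nonneg hC hC) hD,
        mul_nonneg (mul_nonneg hD hD) hD, mul_nonneg (mul_nonneg hC hC) hC, hL2]
    have hxeq : x = 3*s^2 - 1 := by rw [hs2]; ring
    have expand : x - (2 - Real.log 3)/4 * x^2 - (Real.log 3 + 2*(s-1))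
        = (1-s) * (3*((2 - Real.log 3)/4)*(1+s)*(1+3*s^2) - (3*s+1)) := by
      rw [hxeq]; ring
    have h := mul_nonneg hC key
    rw [hlog]
    linarith [expand, h, hloga]
end

section
/- Let g₁,…,g_T ∈ [-1,1] and let v̄ = (-Σₜ gₜ)/(2·Σₜ gₜ² + 2·|Σₜ gₜ|) (with v̄ = 0 if the denominator is 0). Then |v̄| ≤ 1/2 and Σₜ ln(1 - gₜ·v̄) ≥ (Σₜ gₜ)² / (4·Σₜ gₜ² + 4·|Σₜ gₜ|). -/
lemma log_ge_sub_sq {x : ℝ} (hx : |x| ≤ 1/2) : x - x^2 ≤ Real.log (1+x) := by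
  obtain ⟨h1, h2⟩ := abs_le.mp hx
  have hpos : (0:ℝ) < 1 + x := by linarith
  rcases le_or_gt 0 x with hx0 | hx0
  · have h3 : Real.log (1+x)⁻¹ ≤ (1+x)⁻¹ - 1 := Real.log_le_sub_one_of_pos (by positivity)
    rw [Real.log_inv] at h3
    have h4 : 1 - (1+x)⁻¹ ≤ Real.log (1+x) := by linarith
    have h5 : x - x^2 ≤ 1 - (1+x)⁻¹ := by
      have h6 : x^3 / (1+x) ≥ 0 := by positivity
      have h7 : 1 - (1+x)⁻¹ - (x - x^2) = x^3 / (1+x) := by field_simp; ring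
      linarith
    linarith
  · rw [Real.le_log_iff_exp_le hpos]
    have hy : (0:ℝ) ≤ x^2 - x := by nlinarith
    have h3 := Real.quadratic_le_exp_of_nonneg hy
    have h4 : Real.exp (x - x^2) = (Real.exp (x^2 - x))⁻¹ := by
      rw [← Real.exp_neg]; ring_nf
    rw [h4, inv_le_iff_one_le_mul₀ (Real.exp_pos _)]
    calc (1:ℝ) ≤ (1+x) * (1 + (x^2-x) + (x^2-x)^2/2) := by nlinarith [sq_nonneg x, sq_nonneg (1+2*x)]
      _ ≤ (1+x) * Real.exp (x^2-x) := by nlinarith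

theorem constant_betting_fraction_wealth (T : ℕ) (g : Fin T → ℝ)
    (hg : ∀ t, |g t| ≤ 1)
    (v : ℝ)
    (hv : v = (-(∑ t, g t)) / (2 * ∑ t, (g t) ^ 2 + 2 * |∑ t, g t|)) :
    |v| ≤ 1 / 2 ∧
      ∑ t, Real.log (1 - g t * v) ≥
        (∑ t, g t) ^ 2 / (4 * ∑ t, (g t) ^ 2 + 4 * |∑ t, g t|) := by
  set S := ∑ t, g t with hS
  set Q := ∑ t, (g t) ^ 2 with hQ
  have hQ0 : (0:ℝ) ≤ Q := Finset.sum_nonneg fun t _ => sq_nonneg _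
  have hA0 : (0:ℝ) ≤ |S| := abs_nonneg _
  rcases eq_or_lt_of_le (by linarith : (0:ℝ) ≤ 2*Q + 2*|S|) with hD0 | hD0
  · -- degenerate case: denominator is 0, so S = 0 and v = 0
    have hSz : S = 0 := abs_eq_zero.mp (by linarith)
    have hv0 : v = 0 := by rw [hv, hSz]; simp
    constructor
    · rw [hv0]; norm_num
    · rw [hSz]
      simp [hv0]
  · have hD : (0:ℝ) < 2*Q + 2*|S| := hD0
    have hvabs : |v| ≤ 1/2 := by
      rw [hv, abs_div, abs_neg, abs_of_pos hD, div_le_iff₀ hD]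
      linarith
    refine ⟨hvabs, ?_⟩
    have hterm : ∀ t ∈ Finset.univ, -(g t * v) - (g t * v)^2 ≤ Real.log (1 - g t * v) := by
      intro t _
      have hx : |(-(g t * v))| ≤ 1/2 := by
        rw [abs_neg, abs_mul]
        calc |g t| * |v| ≤ 1 * (1/2) := by
              apply mul_le_mul (hg t) hvabs (abs_nonneg _) zero_le_one
          _ = 1/2 := by norm_num
      have := log_ge_sub_sq hx
      have heq : 1 + -(g t * v) = 1 - g t * v := by ring
      rw [heq] at this
      nlinarith [this]
    have hsum : ∑ t, Real.log (1 - g t * v) ≥ -(S*v) - Q*v^2 := by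
      have h1 := Finset.sum_le_sum hterm
      have h2 : ∑ t, (-(g t * v) - (g t * v)^2) = -(S*v) - Q*v^2 := by
        simp only [mul_pow]
        rw [hS, hQ, Finset.sum_sub_distrib, Finset.sum_neg_distrib,
          ← Finset.sum_mul, ← Finset.sum_mul]
      linarith [h1, h2.symm.le]
    have hDne : (2*Q + 2*|S|) ≠ 0 := ne_of_gt hD
    have hkey : -(S*v) - Q*v^2 - S^2 / (4*Q + 4*|S|) = S^2 * |S| / (2*Q + 2*|S|)^2 := by
      have hD2 : (4*Q + 4*|S|) ≠ 0 := ne_of_gt (by linarith)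
      rw [hv]
      field_simp
      ring
    have hnn : (0:ℝ) ≤ S^2 * |S| / (2*Q + 2*|S|)^2 := by positivity
    linarith [hsum, hkey, hnn]
end

section
/- Let B be a normed vector space, g₁,…,g_T ∈ B* with dual norms at most 1, z₁,…,z_T ∈ ℝ, and y₁,…,y_T ∈ B with ‖yₜ‖ ≤ 1. Set wₜ = zₜyₜ and sₜ = ⟨gₜ, yₜ⟩. Then for any ẘ ∈ B, Σₜ ⟨gₜ, wₜ - ẘ⟩ ≤ [Σₜ sₜ(zₜ - ‖ẘ‖)] + ‖ẘ‖·[Σₜ (⟨gₜ, yₜ⟩ - ⟨gₜ, ẘ/‖ẘ‖⟩)], where the second bracket is taken to be Σₜ⟨gₜ,yₜ⟩·‖ẘ‖ with ẘ/‖ẘ‖ interpreted as 0 when ẘ = 0. Moreover |sₜ| ≤ ‖gₜ‖_*. -/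
theorem one_dimensional_reduction {B : Type*} [NormedAddCommGroup B] [NormedSpace ℝ B]
    (T : ℕ) (g : Fin T → StrongDual ℝ B) (hg : ∀ t, ‖g t‖ ≤ 1)
    (z : Fin T → ℝ) (y : Fin T → B) (hy : ∀ t, ‖y t‖ ≤ 1)
    (w : Fin T → B) (hw : ∀ t, w t = z t • y t)
    (s : Fin T → ℝ) (hs : ∀ t, s t = g t (y t)) (w0 : B) :
    (∑ t, g t (w t - w0) ≤
      (∑ t, s t * (z t - ‖w0‖)) +
        ‖w0‖ * ∑ t, (g t (y t) - g t (‖w0‖⁻¹ • w0))) ∧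
    ∀ t, |s t| ≤ ‖g t‖ := by
  constructor
  · apply le_of_eq
    rw [Finset.mul_sum, ← Finset.sum_add_distrib]
    apply Finset.sum_congr rfl
    intro t _
    rw [hw, hs, map_sub, map_smul, map_smul]
    by_cases h0 : w0 = 0
    · simp [h0]
      ring
    · have hn : ‖w0‖ ≠ 0 := norm_ne_zero_iff.mpr h0
      field_simp
      have hinv : ‖w0‖ * (1 / ‖w0‖) = 1 := by rw [one_div, mul_inv_cancel₀ hn]
      simp only [smul_eq_mul]
      linear_combination (g t w0) * hinv
  · intro t
    rw [hs]
    calc |(g t) (y t)| = ‖(g t) (y t)‖ := rfl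
      _ ≤ ‖g t‖ * ‖y t‖ := (g t).le_opNorm _
      _ ≤ ‖g t‖ * 1 := by
          exact mul_le_mul_of_nonneg_left (hy t) (norm_nonneg _)
      _ = ‖g t‖ := mul_one _
end

section
/- Let B be a reflexive Banach space such that for every nonzero b ∈ B there is a unique b* ∈ B* with ‖b*‖_* = 1 and ⟨b*, b⟩ = ‖b‖. Let W ⊂ B be closed and convex, let x ∉ W, and let p be a nearest point of W to x. Then the subdifferential of the distance function S_W at x equals the singleton {(x - p)*}. -/
open Metric

/-- Convexity inequality for `infDist` with respect to a convex nonempty set. -/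
lemma infDist_combo_le {B : Type*} [NormedAddCommGroup B] [NormedSpace ℝ B]
    {W : Set B} (hWne : W.Nonempty) (hWconv : Convex ℝ W)
    {a b : ℝ} (ha : 0 ≤ a) (hb : 0 ≤ b) (hab : a + b = 1) (y z : B) :
    Metric.infDist (a • y + b • z) W ≤ a * Metric.infDist y W + b * Metric.infDist z W := by
  refine le_of_forall_pos_le_add fun ε hε => ?_
  obtain ⟨d₁, hd₁, hd₁'⟩ := (Metric.infDist_lt_iff hWne).1
    (show Metric.infDist y W < Metric.infDist y W + ε by linarith)
  obtain ⟨d₂, hd₂, hd₂'⟩ := (Metric.infDist_lt_iff hWne).1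
    (show Metric.infDist z W < Metric.infDist z W + ε by linarith)
  have hmem : a • d₁ + b • d₂ ∈ W := hWconv hd₁ hd₂ ha hb hab
  have h1 : Metric.infDist (a • y + b • z) W ≤ dist (a • y + b • z) (a • d₁ + b • d₂) :=
    Metric.infDist_le_dist_of_mem hmem
  have h2 : dist (a • y + b • z) (a • d₁ + b • d₂) ≤ a * dist y d₁ + b * dist z d₂ := by
    rw [dist_eq_norm, dist_eq_norm, dist_eq_norm]
    have : a • y + b • z - (a • d₁ + b • d₂) = a • (y - d₁) + b • (z - d₂) := by
      simp [smul_sub]; abel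
    rw [this]
    calc ‖a • (y - d₁) + b • (z - d₂)‖ ≤ ‖a • (y - d₁)‖ + ‖b • (z - d₂)‖ := norm_add_le _ _
      _ = a * ‖y - d₁‖ + b * ‖z - d₂‖ := by
          rw [norm_smul, norm_smul, Real.norm_eq_abs, Real.norm_eq_abs,
            abs_of_nonneg ha, abs_of_nonneg hb]
  nlinarith [dist_nonneg (x := y) (y := d₁), dist_nonneg (x := z) (y := d₂)]

theorem subdifferential_of_distance {B : Type*} [NormedAddCommGroup B]
    [NormedSpace ℝ B] [CompleteSpace B]
    (hrefl : Function.Surjective (NormedSpace.inclusionInDoubleDual ℝ B))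
    (hnorming : ∀ b : B, b ≠ 0 →
      ∃! f : StrongDual ℝ B, ‖f‖ = 1 ∧ f b = ‖b‖)
    (W : Set B) (hWc : IsClosed W) (hWconv : Convex ℝ W)
    (x : B) (hx : x ∉ W) (p : B) (hp : p ∈ W)
    (hnearest : ‖x - p‖ = Metric.infDist x W)
    (xps : StrongDual ℝ B) (hxps1 : ‖xps‖ = 1)
    (hxps2 : xps (x - p) = ‖x - p‖) :
    {g : StrongDual ℝ B |
        ∀ y : B, Metric.infDist y W ≥ Metric.infDist x W + g (y - x)} = {xps} := by
  have hWne : W.Nonempty := ⟨p, hp⟩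
  have hxp : x - p ≠ 0 := sub_ne_zero.2 (fun h => hx (h ▸ hp))
  have hxpos : (0:ℝ) < ‖x - p‖ := norm_pos_iff.2 hxp
  -- Part 1: uniqueness — any subgradient equals xps.
  have huniq : ∀ g : StrongDual ℝ B,
      (∀ y : B, Metric.infDist y W ≥ Metric.infDist x W + g (y - x)) → g = xps := by
    intro g hg
    have hgp := hg p
    rw [Metric.infDist_zero_of_mem hp] at hgp
    have hgxp : ‖x - p‖ ≤ g (x - p) := by
      have : g (p - x) = - g (x - p) := by rw [← map_neg]; congr 1; abel
      rw [this] at hgp; linarith [hnearest ▸ hgp]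
    have hle : ∀ v : B, g v ≤ ‖v‖ := by
      intro v
      have h1 := hg (x + v)
      have h2 : Metric.infDist (x + v) W ≤ Metric.infDist x W + ‖v‖ := by
        have := Metric.infDist_le_infDist_add_dist (x := x + v) (y := x) (s := W)
        rwa [dist_eq_norm, add_sub_cancel_left] at this
      have h3 : g ((x + v) - x) = g v := by congr 1; abel
      rw [h3] at h1; linarith
    have hnorm_le : ‖g‖ ≤ 1 := by
      refine ContinuousLinearMap.opNorm_le_bound _ zero_le_one fun v => ?_
      rw [Real.norm_eq_abs, one_mul, abs_le]
      constructor
      · have := hle (-v); rw [map_neg, norm_neg] at this; linarith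
      · exact hle v
    have hgxp_eq : g (x - p) = ‖x - p‖ := le_antisymm (hle _) hgxp
    have hnorm_ge : (1:ℝ) ≤ ‖g‖ := by
      have h := g.le_opNorm (x - p)
      rw [hgxp_eq, Real.norm_eq_abs, abs_of_nonneg (norm_nonneg _)] at h
      nlinarith
    obtain ⟨f, _, hfu⟩ := hnorming (x - p) hxp
    rw [hfu g ⟨le_antisymm hnorm_le hnorm_ge, hgxp_eq⟩, hfu xps ⟨hxps1, hxps2⟩]
  -- Part 2: existence of a subgradient via Hahn-Banach.
  obtain ⟨g₀, hg₀⟩ : ∃ g : StrongDual ℝ B,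
      ∀ y : B, Metric.infDist y W ≥ Metric.infDist x W + g (y - x) := by
    set F : B → ℝ := fun y => Metric.infDist y W with hF
    set A : Set (B × ℝ) := {q | F q.1 < q.2} with hA
    have hAopen : IsOpen A :=
      isOpen_lt ((Metric.continuous_infDist_pt W).comp continuous_fst) continuous_snd
    have hAconv : Convex ℝ A := by
      rintro ⟨y₁, t₁⟩ h1 ⟨y₂, t₂⟩ h2 a b ha hb hab
      simp only [hA, Set.mem_setOf_eq, Prod.smul_mk, Prod.mk_add_mk, smul_eq_mul] at h1 h2 ⊢
      have hcomb := infDist_combo_le hWne hWconv ha hb hab y₁ y₂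
      rcases ha.eq_or_lt with rfl | ha'
      · have hb1 : b = 1 := by linarith
        subst hb1; simpa using h2
      · have e1 : a * F y₁ < a * t₁ := by nlinarith
        have e2 : b * F y₂ ≤ b * t₂ := by nlinarith
        linarith
    have hxA : ((x, F x) : B × ℝ) ∉ A := by simp [hA]
    obtain ⟨φ, hφ⟩ := geometric_hahn_banach_open_point hAconv hAopen hxA
    set c : ℝ := φ (0, 1) with hc
    have key : ∀ y t, F y < t → φ (y, 0) + t * c < φ (x, 0) + F x * c := by
      intro y t h
      have h1 := hφ (y, t) h
      have e1 : ((y, t) : B × ℝ) = (y, 0) + t • ((0:B), (1:ℝ)) := by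
        simp [Prod.ext_iff]
      have e2 : ((x, F x) : B × ℝ) = (x, 0) + (F x) • ((0:B), (1:ℝ)) := by
        simp [Prod.ext_iff]
      rw [e1, e2, map_add, map_add, map_smul, map_smul] at h1
      simpa [smul_eq_mul, mul_comm] using h1
    have hc0 : c < 0 := by
      have := key x (F x + 1) (by linarith)
      nlinarith
    have key2 : ∀ y : B, φ (y, 0) - φ (x, 0) ≤ (F x - F y) * c := by
      intro y
      refine le_of_forall_pos_le_add fun ε hε => ?_
      have hcne : c ≠ 0 := ne_of_lt hc0
      have hεc : 0 < ε / (-c) := div_pos hε (neg_pos.2 hc0)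
      have := key y (F y + ε / (-c)) (by linarith)
      have hce : ε / -c * c = -ε := by
        rw [div_mul_eq_mul_div, mul_div_assoc, div_neg, div_self hcne, mul_neg, mul_one]
      nlinarith
    refine ⟨(-c)⁻¹ • φ.comp (ContinuousLinearMap.inl ℝ B ℝ), fun y => ?_⟩
    have h1 := key2 y
    have hval : ((-c)⁻¹ • φ.comp (ContinuousLinearMap.inl ℝ B ℝ)) (y - x)
        = (-c)⁻¹ * (φ (y, 0) - φ (x, 0)) := by
      simp only [ContinuousLinearMap.smul_apply, ContinuousLinearMap.comp_apply,
        ContinuousLinearMap.inl_apply, smul_eq_mul]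
      rw [show ((y - x, (0:ℝ)) : B × ℝ) = (y, 0) - (x, 0) by simp [Prod.ext_iff], map_sub]
    rw [ge_iff_le, hval]
    have hcpos : 0 < -c := by linarith
    have h2 : (-c)⁻¹ * (φ (y, 0) - φ (x, 0)) ≤ F y - F x := by
      rw [inv_mul_le_iff₀ hcpos]; nlinarith
    simp only [hF] at h2
    linarith
  ext g
  simp only [Set.mem_setOf_eq, Set.mem_singleton_iff]
  exact ⟨huniq g, fun h => h ▸ (huniq g₀ hg₀ ▸ hg₀)⟩
end

section
/- Let W ⊂ B be a closed convex subset of a reflexive Banach space. Let g₁,…,g_T ∈ B*, z₁,…,z_T ∈ B, wₜ ∈ Π_W(zₜ) a nearest point of W to zₜ, and define g̃ₜ ∈ (1/2)(gₜ + ‖gₜ‖_*·∂S_W(zₜ)) a subgradient of ℓ̃ₜ(x) = (1/2)(⟨gₜ,x⟩ + ‖gₜ‖_*·S_W(x)) at zₜ. Then for every ẘ ∈ W: Σₜ ⟨gₜ, wₜ - ẘ⟩ ≤ 2·Σₜ (ℓ̃ₜ(zₜ) - ℓ̃ₜ(ẘ)), and ‖g̃ₜ‖_* ≤ ‖gₜ‖_*.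 -/
theorem constrained_reduction {B : Type*} [NormedAddCommGroup B] [NormedSpace ℝ B]
    [CompleteSpace B] (W : Set B) (hWc : IsClosed W) (hWconv : Convex ℝ W)
    (T : ℕ) (g : Fin T → StrongDual ℝ B) (z : Fin T → B)
    (w : Fin T → B) (hwW : ∀ t, w t ∈ W)
    (hwproj : ∀ t, ‖z t - w t‖ = Metric.infDist (z t) W)
    (ell : Fin T → B → ℝ)
    (hell : ∀ t x, ell t x = (1/2) * (g t x + ‖g t‖ * Metric.infDist x W))
    (gt : Fin T → StrongDual ℝ B)
    (hsub : ∀ t, ∀ y : B, ell t y ≥ ell t (z t) + gt t (y - z t)) :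
    (∀ w0 ∈ W, ∑ t, g t (w t - w0) ≤ 2 * ∑ t, (ell t (z t) - ell t w0)) ∧
      ∀ t, ‖gt t‖ ≤ ‖g t‖ := by
  constructor
  · intro w0 hw0
    rw [Finset.mul_sum]
    apply Finset.sum_le_sum
    intro t _
    have hd0 : Metric.infDist w0 W = 0 := Metric.infDist_zero_of_mem hw0
    have h1 : g t (w t) - g t (z t) ≤ ‖g t‖ * ‖z t - w t‖ := by
      calc g t (w t) - g t (z t) = g t (w t - z t) := by rw [map_sub]
        _ ≤ ‖g t‖ * ‖w t - z t‖ := le_trans (le_abs_self _) ((g t).le_opNorm _)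
        _ = ‖g t‖ * ‖z t - w t‖ := by rw [norm_sub_rev]
    have : g t (w t - w0) = g t (w t) - g t w0 := by rw [map_sub]
    rw [this, hell, hell, hd0, ← hwproj]
    ring_nf
    nlinarith [h1]
  · intro t
    apply ContinuousLinearMap.opNorm_le_bound _ (norm_nonneg _)
    intro v
    have key : ∀ u : B, gt t u ≤ ‖g t‖ * ‖u‖ := by
      intro u
      have h := hsub t (z t + u)
      have hlip : ell t (z t + u) - ell t (z t) ≤ ‖g t‖ * ‖u‖ := by
        rw [hell, hell]
        have h1 : g t (z t + u) - g t (z t) ≤ ‖g t‖ * ‖u‖ := by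
          calc g t (z t + u) - g t (z t) = g t u := by rw [map_add]; ring
            _ ≤ ‖g t‖ * ‖u‖ := le_trans (le_abs_self _) ((g t).le_opNorm _)
        have h2 : Metric.infDist (z t + u) W - Metric.infDist (z t) W ≤ ‖u‖ := by
          have := Metric.infDist_le_infDist_add_dist (x := z t + u) (y := z t) (s := W)
          have hd : dist (z t + u) (z t) = ‖u‖ := by
            rw [dist_eq_norm]; simp
          linarith
        nlinarith [norm_nonneg (g t), norm_nonneg u]
      have : gt t (z t + u - z t) = gt t u := by congr 1; abel
      rw [this] at h
      linarith
    have h1 := key v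
    have h2 := key (-v)
    rw [map_neg, norm_neg] at h2
    rw [Real.norm_eq_abs]
    exact abs_le.mpr ⟨by linarith, h1⟩
end

section
/- Let f: V → ℝ be a function on a normed vector space satisfying f((x+y)/2) ≤ (1/2)f(x) + (1/2)f(y) - (D/(2p))·‖x - y‖^p for all x, y, where D > 0 and p ≥ 1, and suppose f is convex. Then for every x, every subgradient g of f at x, and every δ: f(x + δ) ≥ f(x) + g(δ) + (D/p)·‖δ‖^p. -/
theorem midpoint_uniform_convexity_subgradient {V : Type*} [NormedAddCommGroup V]
    [NormedSpace ℝ V] (f : V → ℝ) (D p : ℝ) (hD : 0 < D) (hp : 1 ≤ p)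
    (hconv : ConvexOn ℝ Set.univ f)
    (hmid : ∀ x y : V, f ((1/2 : ℝ) • (x + y)) ≤
      (1/2) * f x + (1/2) * f y - (D / (2 * p)) * ‖x - y‖ ^ p)
    (x δ : V) (g : StrongDual ℝ V)
    (hg : ∀ y : V, f y ≥ f x + g (y - x)) :
    f (x + δ) ≥ f x + g δ + (D / p) * ‖δ‖ ^ p := by
  have hp0 : (0:ℝ) < p := lt_of_lt_of_le one_pos hp
  have h1 := hmid x (x + δ)
  have h2 := hg ((1/2 : ℝ) • (x + (x + δ)))
  have hs : (1/2 : ℝ) • (x + (x + δ)) - x = (1/2 : ℝ) • δ := by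
    module
  rw [hs, map_smul] at h2
  have hn : ‖x - (x + δ)‖ = ‖δ‖ := by rw [show x - (x + δ) = -δ from by abel, norm_neg]
  rw [hn] at h1
  have hdp : D / p = 2 * (D / (2 * p)) := by field_simp
  rw [hdp]
  simp only [smul_eq_mul] at h2
  linarith
end

section
/- Let B be a Banach space that is (2, D)-uniformly convex, i.e. ‖x+y‖² + ‖x-y‖² ≥ 2‖x‖² + 2D‖y‖² for all x, y ∈ B. Then f(x) = (1/2)‖x‖² is D-strongly convex with respect to ‖·‖: for all x, δ and every subgradient g ∈ ∂f(x), f(x+δ) ≥ f(x) + g(δ) + (D/2)‖δ‖². -/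
theorem uniformly_convex_sq_norm_strongly_convex {B : Type*} [NormedAddCommGroup B]
    [NormedSpace ℝ B] [CompleteSpace B] (D : ℝ) (hD : 0 < D)
    (huc : ∀ x y : B, ‖x + y‖ ^ 2 + ‖x - y‖ ^ 2 ≥ 2 * ‖x‖ ^ 2 + 2 * D * ‖y‖ ^ 2)
    (x δ : B) (g : StrongDual ℝ B)
    (hg : ∀ y : B, (1/2) * ‖y‖ ^ 2 ≥ (1/2) * ‖x‖ ^ 2 + g (y - x)) :
    (1/2) * ‖x + δ‖ ^ 2 ≥ (1/2) * ‖x‖ ^ 2 + g δ + (D / 2) * ‖δ‖ ^ 2 := by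
  have key : ∀ n : ℕ, ∀ t : ℝ,
      (1/2) * ‖x + t • δ‖ ^ 2 ≥ (1/2) * ‖x‖ ^ 2 + g (t • δ)
        + (D/2) * (1 - (1/2 : ℝ) ^ n) * (t ^ 2 * ‖δ‖ ^ 2) := by
    intro n
    induction n with
    | zero =>
      intro t
      have := hg (x + t • δ)
      simp only [add_sub_cancel_left] at this
      simpa using this
    | succ n ih =>
      intro t
      have h1 := huc (x + (t/2) • δ) ((t/2) • δ)
      have e1 : x + (t/2) • δ + (t/2) • δ = x + t • δ := by
        rw [add_assoc, ← add_smul]; ring_nf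
      have e2 : x + (t/2) • δ - (t/2) • δ = x := by abel
      rw [e1, e2] at h1
      have e3 : ‖(t/2) • δ‖ ^ 2 = (t/2) ^ 2 * ‖δ‖ ^ 2 := by
        rw [norm_smul, mul_pow, Real.norm_eq_abs, sq_abs]
      rw [e3] at h1
      have h2 := ih (t/2)
      have e4 : g (t • δ) = 2 * g ((t/2) • δ) := by
        have : t • δ = (2:ℝ) • ((t/2) • δ) := by
          rw [smul_smul]; congr 1; ring
        rw [this, map_smul]
        simp
      have hx : (1/2) * ‖x + t • δ‖ ^ 2 ≥
          ‖x + (t/2) • δ‖ ^ 2 + D * ((t/2)^2 * ‖δ‖^2) - (1/2) * ‖x‖ ^ 2 := by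
        nlinarith [h1]
      calc (1/2) * ‖x + t • δ‖ ^ 2
          ≥ ‖x + (t/2) • δ‖ ^ 2 + D * ((t/2)^2 * ‖δ‖^2) - (1/2) * ‖x‖ ^ 2 := hx
        _ ≥ (1/2) * ‖x‖ ^ 2 + g (t • δ)
            + (D/2) * (1 - (1/2 : ℝ) ^ (n+1)) * (t ^ 2 * ‖δ‖ ^ 2) := by
            rw [e4]
            have hp : ((1/2:ℝ)) ^ (n+1) = (1/2) ^ n * (1/2) := pow_succ _ _
            nlinarith [h2, hp]
  have hlim : Filter.Tendsto
      (fun n : ℕ => (1/2) * ‖x‖ ^ 2 + g δ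
        + (D/2) * (1 - (1/2 : ℝ) ^ n) * (1 ^ 2 * ‖δ‖ ^ 2))
      Filter.atTop (nhds ((1/2) * ‖x‖ ^ 2 + g δ + (D/2) * (1 - 0) * (1 ^ 2 * ‖δ‖ ^ 2))) := by
    apply Filter.Tendsto.add tendsto_const_nhds
    apply Filter.Tendsto.mul_const
    apply Filter.Tendsto.const_mul
    exact (tendsto_const_nhds.sub (tendsto_pow_atTop_nhds_zero_of_lt_one (by norm_num) (by norm_num)))
  have h : (1/2) * ‖x‖ ^ 2 + g δ + (D/2) * (1 - 0) * (1 ^ 2 * ‖δ‖ ^ 2)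
      ≤ (1/2) * ‖x + δ‖ ^ 2 := by
    refine le_of_tendsto hlim (Filter.Eventually.of_forall fun n => ?_)
    have := key n 1
    simp only [one_smul, one_pow, one_mul] at this ⊢
    linarith
  have : (D/2) * (1 - 0) * (1 ^ 2 * ‖δ‖ ^ 2) = (D/2) * ‖δ‖ ^ 2 := by ring
  linarith
end

section
/- Let B be a normed space, g ∈ B* with ‖g‖_* ≤ 1, and define ℓ(v) = -ln(1 - ⟨g, v⟩) for ‖v‖ ≤ 1/2. Then for all v, v̄ with ‖v‖ ≤ 1/2 and ‖v̄‖ ≤ 1/2: ℓ(v) - ℓ(v̄) ≤ ⟨∇ℓ(v), v - v̄⟩ - ((2 - ln 3)/4)·⟨∇ℓ(v), v - v̄⟩², where ∇ℓ(v) = g/(1 - ⟨g, v⟩). -/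
open Real

private lemma log3_lt_two : Real.log 3 < 2 := by
  rw [Real.log_lt_iff_lt_exp (by norm_num)]
  have h := Real.exp_one_gt_d9
  have : Real.exp 2 = Real.exp 1 ^ 2 := by
    rw [← Real.exp_nat_mul]; norm_num
  nlinarith [Real.exp_pos 1]

private lemma log3_le : Real.log 3 ≤ 4/3 := by
  rw [Real.log_le_iff_le_exp (by norm_num)]
  have h : Real.exp (4/3) = Real.exp (1/3) ^ (4:ℕ) := by
    rw [← Real.exp_nat_mul]; norm_num
  have h2 : (1:ℝ)/3 + 1 ≤ Real.exp (1/3) := Real.add_one_le_exp _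
  have h3 : ((1:ℝ)/3 + 1)^(4:ℕ) ≤ Real.exp (1/3) ^ (4:ℕ) :=
    pow_le_pow_left₀ (by norm_num) h2 4
  nlinarith

private lemma key_ineq (x : ℝ) (hx1 : -1 < x) (hx2 : x ≤ 2) :
    Real.log (1 + x) ≤ x - ((2 - Real.log 3) / 4) * x ^ 2 := by
  set c : ℝ := (2 - Real.log 3) / 4 with hc
  have hl3 : 0 < Real.log 3 := Real.log_pos (by norm_num)
  have hc0 : 0 < c := by rw [hc]; linarith [log3_lt_two]
  have hc1 : 1/6 ≤ c := by rw [hc]; linarith [log3_le]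
  have hc2 : c < 1/2 := by rw [hc]; linarith
  set f : ℝ → ℝ := fun y => y - c * y ^ 2 - Real.log (1 + y) with hf
  have hder : ∀ y : ℝ, -1 < y → HasDerivAt f (1 - 2*c*y - 1/(1+y)) y := by
    intro y hy
    have hy0 : (1:ℝ) + y ≠ 0 := by linarith
    have h1 : HasDerivAt (fun z : ℝ => Real.log (1 + z)) (1/(1+y)) y := by
      have := ((hasDerivAt_id y).const_add 1).log hy0
      simpa using this
    have h2 : HasDerivAt (fun z : ℝ => z - c * z ^ 2) (1 - c * (2*y)) y := by
      have := (hasDerivAt_id' y).sub (((hasDerivAt_pow 2 y)).const_mul c)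
      exact this.congr_deriv (by norm_num)
    have := h2.sub h1
    exact this.congr_deriv (by ring)
  have hf0 : f 0 = 0 := by simp [hf]
  have hf2 : f 2 = 0 := by
    have : (1:ℝ) + 2 = 3 := by norm_num
    simp [hf, this]
    ring
  -- goal: 0 ≤ f x
  suffices h : 0 ≤ f x by
    simp only [hf] at h; linarith
  set t : ℝ := (1 - 2*c) / (2*c) with ht
  have ht0 : 0 < t := by
    apply div_pos <;> linarith
  have ht2 : t ≤ 2 := by
    rw [ht, div_le_iff₀ (by linarith)]; linarith
  rcases le_total x 0 with hx0 | hx0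
  · -- antitone on [x, 0]
    have hanti : AntitoneOn f (Set.Icc x 0) := by
      apply antitoneOn_of_deriv_nonpos (convex_Icc x 0)
      · intro y hy
        exact (hder y (by linarith [hy.1])).continuousAt.continuousWithinAt
      · intro y hy
        rw [interior_Icc] at hy
        exact (hder y (by linarith [hy.1])).differentiableAt.differentiableWithinAt
      · intro y hy
        rw [interior_Icc] at hy
        obtain ⟨hy1, hy2⟩ := hy
        have hym : -1 < y := by linarith
        rw [(hder y hym).deriv]
        have hyp : (0:ℝ) < 1 + y := by linarith
        rw [sub_nonpos, le_div_iff₀ hyp]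
        have hpos : 0 < 1 - 2*c - 2*c*y := by nlinarith
        nlinarith [mul_neg_of_neg_of_pos hy2 hpos]
    have := hanti (Set.left_mem_Icc.mpr hx0) (Set.right_mem_Icc.mpr hx0) hx0
    linarith [hf0 ▸ this]
  · rcases le_total x t with hxt | hxt
    · -- monotone on [0, x]
      have hmono : MonotoneOn f (Set.Icc 0 x) := by
        apply monotoneOn_of_deriv_nonneg (convex_Icc 0 x)
        · intro y hy
          exact (hder y (by linarith [hy.1])).continuousAt.continuousWithinAt
        · intro y hy
          rw [interior_Icc] at hy
          exact (hder y (by linarith [hy.1])).differentiableAt.differentiableWithinAt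
        · intro y hy
          rw [interior_Icc] at hy
          obtain ⟨hy1, hy2⟩ := hy
          have hyt : y < t := lt_of_lt_of_le hy2 hxt
          have h2cy : 2*c*y < 1 - 2*c := by
            rw [ht, lt_div_iff₀ (by linarith)] at hyt
            nlinarith
          rw [(hder y (by linarith)).deriv]
          have hyp : (0:ℝ) < 1 + y := by linarith
          rw [sub_nonneg, div_le_iff₀ hyp]
          nlinarith
      have := hmono (Set.left_mem_Icc.mpr hx0) (Set.right_mem_Icc.mpr hx0) hx0
      linarith [hf0 ▸ this]
    · -- antitone on [x, 2]
      have hanti : AntitoneOn f (Set.Icc x 2) := by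
        apply antitoneOn_of_deriv_nonpos (convex_Icc x 2)
        · intro y hy
          exact (hder y (by linarith [hy.1, ht0])).continuousAt.continuousWithinAt
        · intro y hy
          rw [interior_Icc] at hy
          exact (hder y (by linarith [hy.1, ht0])).differentiableAt.differentiableWithinAt
        · intro y hy
          rw [interior_Icc] at hy
          obtain ⟨hy1, hy2⟩ := hy
          have hyt : t < y := lt_of_le_of_lt hxt hy1
          have hy0 : 0 < y := lt_trans ht0 hyt
          have h2cy : 1 - 2*c < 2*c*y := by
            rw [ht, div_lt_iff₀ (by linarith)] at hyt
            nlinarith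
          rw [(hder y (by linarith)).deriv]
          have hyp : (0:ℝ) < 1 + y := by linarith
          rw [sub_nonpos, le_div_iff₀ hyp]
          nlinarith
      have := hanti (Set.left_mem_Icc.mpr hx2) (Set.right_mem_Icc.mpr hx2) hx2
      linarith [hf2 ▸ this]

theorem expconcave_quadratic_bound {B : Type*} [NormedAddCommGroup B]
    [NormedSpace ℝ B] (g : StrongDual ℝ B) (hg : ‖g‖ ≤ 1)
    (v vbar : B) (hv : ‖v‖ ≤ 1 / 2) (hvbar : ‖vbar‖ ≤ 1 / 2) :
    -Real.log (1 - g v) - (-Real.log (1 - g vbar)) ≤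
      (g (v - vbar)) / (1 - g v) -
        ((2 - Real.log 3) / 4) * ((g (v - vbar)) / (1 - g v)) ^ 2 := by
  have ha : |g v| ≤ 1/2 := by
    calc |g v| ≤ ‖g‖ * ‖v‖ := g.le_opNorm v
    _ ≤ 1 * (1/2) := by
        apply mul_le_mul hg hv (norm_nonneg v) (by norm_num)
    _ = 1/2 := by norm_num
  have hb : |g vbar| ≤ 1/2 := by
    calc |g vbar| ≤ ‖g‖ * ‖vbar‖ := g.le_opNorm vbar
    _ ≤ 1 * (1/2) := by
        apply mul_le_mul hg hvbar (norm_nonneg vbar) (by norm_num)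
    _ = 1/2 := by norm_num
  rw [abs_le] at ha hb
  obtain ⟨ha1, ha2⟩ := ha
  obtain ⟨hb1, hb2⟩ := hb
  have hA : (0:ℝ) < 1 - g v := by linarith
  have hB : (0:ℝ) < 1 - g vbar := by linarith
  set x : ℝ := g (v - vbar) / (1 - g v) with hx
  have hgsub : g (v - vbar) = g v - g vbar := map_sub g v vbar
  have h1x : 1 + x = (1 - g vbar) / (1 - g v) := by
    rw [hx, hgsub]
    field_simp
    ring
  have hx1 : -1 < x := by
    have : 0 < 1 + x := h1x ▸ div_pos hB hA
    linarith
  have hx2 : x ≤ 2 := by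
    have : (1:ℝ) + x ≤ 3 := by
      rw [h1x, div_le_iff₀ hA]
      linarith
    linarith
  have hlog : -Real.log (1 - g v) - (-Real.log (1 - g vbar)) = Real.log (1 + x) := by
    rw [h1x, Real.log_div (ne_of_gt hB) (ne_of_gt hA)]
    ring
  rw [hlog]
  exact key_ineq x hx1 hx2
end

section
/- With the notation of the running weighted average x̄ₜ = (x̄₀ + Σ_{i=1}^t hᵢxᵢ)/Zₜ, Zₜ = 1 + Σ_{i=1}^t hᵢ, define σₜ² = (‖x̄ₜ - x̄₀‖² + Σ_{i=1}^t hᵢ‖xᵢ - x̄ₜ‖²)/Zₜ in a Hilbert space. Then σ_T²Z_T = σ_{T-1}²Z_{T-1} + h_T·(Z_T/Z_{T-1})·‖x_T - x̄_T‖², and consequently Σ_{t=1}^T (Zₜ/Z_{t-1})·hₜ·‖xₜ - x̄ₜ‖² = σ_T²Z_T. -/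
open scoped RealInnerProductSpace

theorem weighted_variance_recursion {H : Type*} [NormedAddCommGroup H]
    [InnerProductSpace ℝ H] (x : ℕ → H) (h : ℕ → ℝ) (hnn : ∀ t, 1 ≤ t → 0 ≤ h t)
    (xb0 : H) (Z : ℕ → ℝ) (hZ : ∀ t, Z t = 1 + ∑ i ∈ Finset.Icc 1 t, h i)
    (xb : ℕ → H)
    (hxb : ∀ t, xb t = (Z t)⁻¹ • (xb0 + ∑ i ∈ Finset.Icc 1 t, h i • x i))
    (S : ℕ → ℝ)
    (hS : ∀ t, S t = ‖xb t - xb0‖ ^ 2 + ∑ i ∈ Finset.Icc 1 t, h i * ‖x i - xb t‖ ^ 2)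
    (T : ℕ) (hT : 1 ≤ T) :
    S T = S (T - 1) + h T * (Z T / Z (T - 1)) * ‖x T - xb T‖ ^ 2 ∧
      ∑ t ∈ Finset.Icc 1 T, (Z t / Z (t - 1)) * h t * ‖x t - xb t‖ ^ 2 = S T := by
  have hZpos : ∀ t, 0 < Z t := by
    intro t
    rw [hZ]
    have : 0 ≤ ∑ i ∈ Finset.Icc 1 t, h i :=
      Finset.sum_nonneg fun i hi => hnn i (Finset.mem_Icc.mp hi).1
    linarith
  have hA : ∀ t, Z t • xb t = xb0 + ∑ i ∈ Finset.Icc 1 t, h i • x i := by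
    intro t
    rw [hxb, smul_smul, mul_inv_cancel₀ (hZpos t).ne', one_smul]
  have key : ∀ t, S t = ‖xb0‖ ^ 2 + (∑ i ∈ Finset.Icc 1 t, h i * ‖x i‖ ^ 2)
      - Z t * ‖xb t‖ ^ 2 := by
    intro t
    have hinner : (inner ℝ xb0 (xb t) : ℝ) + (inner ℝ (∑ i ∈ Finset.Icc 1 t, h i • x i) (xb t) : ℝ)
        = Z t * ‖xb t‖ ^ 2 := by
      have h1 := congrArg (fun y : H => (inner ℝ y (xb t) : ℝ)) (hA t)
      simpa [inner_add_left, real_inner_smul_left, real_inner_self_eq_norm_sq] using h1.symm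
    have hsum : ∑ i ∈ Finset.Icc 1 t, h i * ‖x i - xb t‖ ^ 2
        = (∑ i ∈ Finset.Icc 1 t, h i * ‖x i‖ ^ 2)
          - 2 * (inner ℝ (∑ i ∈ Finset.Icc 1 t, h i • x i) (xb t) : ℝ)
          + (Z t - 1) * ‖xb t‖ ^ 2 := by
      have hterm : ∀ i ∈ Finset.Icc 1 t, h i * ‖x i - xb t‖ ^ 2
          = h i * ‖x i‖ ^ 2 - 2 * (h i * (inner ℝ (x i) (xb t) : ℝ)) + h i * ‖xb t‖ ^ 2 := by
        intro i _
        rw [@norm_sub_sq_real]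
        ring
      rw [Finset.sum_congr rfl hterm, Finset.sum_add_distrib, Finset.sum_sub_distrib,
        ← Finset.mul_sum, ← Finset.sum_mul, sum_inner, hZ t]
      simp_rw [real_inner_smul_left]
      ring
    have hc : (inner ℝ (xb t) xb0 : ℝ) = (inner ℝ xb0 (xb t) : ℝ) := real_inner_comm _ _
    rw [hS t, hsum, @norm_sub_sq_real]
    linear_combination -2 * hinner - 2 * hc
  have hrec : ∀ t, S (t + 1) = S t + h (t + 1) * (Z (t + 1) / Z t) * ‖x (t + 1) - xb (t + 1)‖ ^ 2 := by
    intro t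
    have hsucc : Z (t + 1) = Z t + h (t + 1) := by
      rw [hZ, hZ, Finset.sum_Icc_succ_top (Nat.le_add_left 1 t)]
      ring
    have hrel : Z t • xb t = Z (t + 1) • xb (t + 1) - h (t + 1) • x (t + 1) := by
      rw [hA, hA, Finset.sum_Icc_succ_top (Nat.le_add_left 1 t)]
      abel
    have hnorm : (Z t) ^ 2 * ‖xb t‖ ^ 2
        = (Z (t + 1)) ^ 2 * ‖xb (t + 1)‖ ^ 2
          - 2 * (Z (t + 1) * h (t + 1) * (inner ℝ (xb (t + 1)) (x (t + 1)) : ℝ))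
          + (h (t + 1)) ^ 2 * ‖x (t + 1)‖ ^ 2 := by
      have h2 := congrArg (fun y : H => ‖y‖ ^ 2) hrel
      simp only [norm_smul, mul_pow, Real.norm_eq_abs, sq_abs] at h2
      rw [h2, @norm_sub_sq_real, real_inner_smul_left, real_inner_smul_right,
        norm_smul, norm_smul, mul_pow, mul_pow, Real.norm_eq_abs, Real.norm_eq_abs,
        sq_abs, sq_abs]
      ring
    have hc : (inner ℝ (x (t + 1)) (xb (t + 1)) : ℝ) = (inner ℝ (xb (t + 1)) (x (t + 1)) : ℝ) := real_inner_comm _ _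
    rw [key (t + 1), key t, Finset.sum_Icc_succ_top (Nat.le_add_left 1 t), @norm_sub_sq_real]
    rw [hsucc] at hnorm ⊢
    have hZne : Z t ≠ 0 := (hZpos t).ne'
    field_simp [hZne]
    linear_combination hnorm + 2 * h (t + 1) * (Z t + h (t + 1)) * hc
  have hS0 : S 0 = 0 := by
    have hxb00 : xb 0 = xb0 := by
      rw [hxb]
      simp [hZ]
    rw [hS, hxb00]
    simp
  constructor
  · obtain ⟨u, rfl⟩ : ∃ u, T = u + 1 := ⟨T - 1, (Nat.succ_pred_eq_of_pos hT).symm⟩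
    simpa using hrec u
  · clear hT
    induction T with
    | zero => simp [hS0]
    | succ k ih =>
      rw [Finset.sum_Icc_succ_top (Nat.le_add_left 1 k), ih, hrec k]
      simp only [Nat.add_sub_cancel]
      ring
end
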